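/- For t ≤ min(k, v-k), the kernel of the transpose of the inclusion matrix W_{t,k} over ℚ is trivial: if a vector x indexed by t-element subsets satisfies x · W_{t,k} = 0, then x = 0. -/

import Mathlib

open Matrix Finset

section Aux

variable {α : Type*} [DecidableEq α]

/-- Transfer a filtered card over a subtype of a finset to the finset level. -/
lemma aux_card_filter_subtype (s : Finset α) (p : α → Prop) [DecidablePred p] :
    (Finset.univ.filter (fun K : ↥s => p ↑K)).card = (s.filter p).card := by
  apply Finset.card_bij (fun (K : ↥s) _ => (K : α))
  · intro a ha
    exact Finset.mem_filter.2 ⟨a.2, (Finset.mem_filter.1 ha).2⟩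
  · intro a₁ _ a₂ _ h
    exact Subtype.ext h
  · intro b hb
    exact ⟨⟨b, (Finset.mem_filter.1 hb).1⟩,
      Finset.mem_filter.2 ⟨Finset.mem_univ _, (Finset.mem_filter.1 hb).2⟩, rfl⟩

/-- The key counting lemma: the number of `k`-subsets `K` of `V` containing the `t`-set `T`
and meeting the `t`-set `T'` in exactly `j` points depends only on `m = #(T ∩ T')`. -/
lemma aux_count (V : Finset α) (t k j : ℕ) (T T' : Finset α)
    (hT : T ⊆ V) (hT' : T' ⊆ V) (hTc : T.card = t) (hT'c : T'.card = t)
    (hmj : (T ∩ T').card ≤ j) (hjk : t + j ≤ k + (T ∩ T').card) :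
    ((V.powersetCard k).filter (fun K => T ⊆ K ∧ (K ∩ T').card = j)).card
      = (t - (T ∩ T').card).choose (j - (T ∩ T').card) *
        (V.card - (2 * t - (T ∩ T').card)).choose (k + (T ∩ T').card - (t + j)) := by
  set m := (T ∩ T').card with hmdef
  have hmt : m ≤ t := hTc ▸ Finset.card_le_card Finset.inter_subset_left
  have hsd : (T' \ T).card = t - m := by
    have h1 := Finset.card_inter_add_card_sdiff T' T
    rw [Finset.inter_comm] at h1
    omega
  have hun : (T ∪ T').card = 2 * t - m := by
    have h1 := Finset.card_union_add_card_inter T T'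
    omega
  have hVsd : (V \ (T ∪ T')).card = V.card - (2 * t - m) := by
    rw [Finset.card_sdiff_of_subset (Finset.union_subset hT hT'), hun]
  rw [← hsd, ← hVsd, ← Finset.card_powersetCard, ← Finset.card_powersetCard,
    ← Finset.card_product]
  apply Finset.card_bij' (fun K _ => ((K ∩ T') \ T, K \ (T ∪ T')))
    (fun p _ => T ∪ p.1 ∪ p.2)
  · -- forward map lands in the product
    intro K hK
    rw [Finset.mem_filter, Finset.mem_powersetCard] at hK
    obtain ⟨⟨hKV, hKc⟩, hTK, hKj⟩ := hK
    have hTT'sub : T ∩ T' ⊆ K ∩ T' := Finset.inter_subset_inter hTK Finset.Subset.rfl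
    have h1 : (K ∩ T') \ T = (K ∩ T') \ (T ∩ T') := by
      ext a; simp only [Finset.mem_sdiff, Finset.mem_inter]; tauto
    have hc1 : ((K ∩ T') \ T).card = j - m := by
      rw [h1, Finset.card_sdiff_of_subset hTT'sub, hKj]
    have h2 : K ∩ (T ∪ T') = T ∪ (K ∩ T') := by
      ext a
      simp only [Finset.mem_inter, Finset.mem_union]
      have := @hTK a
      tauto
    have h3 : T ∩ (K ∩ T') = T ∩ T' := by
      ext a
      simp only [Finset.mem_inter]
      have := @hTK a
      tauto
    have h4 := Finset.card_union_add_card_inter T (K ∩ T')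
    rw [h3, hTc, hKj, ← hmdef] at h4
    have h5 := Finset.card_sdiff_add_card_inter K (T ∪ T')
    rw [h2, hKc] at h5
    have hc2 : (K \ (T ∪ T')).card = k + m - (t + j) := by omega
    rw [Finset.mem_product, Finset.mem_powersetCard, Finset.mem_powersetCard]
    exact ⟨⟨Finset.sdiff_subset_sdiff Finset.inter_subset_right Finset.Subset.rfl, hc1⟩,
      ⟨Finset.sdiff_subset_sdiff hKV Finset.Subset.rfl, hc2⟩⟩
  · -- backward map lands in the filter
    intro p hp
    rw [Finset.mem_product, Finset.mem_powersetCard, Finset.mem_powersetCard] at hp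
    obtain ⟨⟨hA, hAc⟩, hB, hBc⟩ := hp
    have h1 : ∀ a ∈ p.1, a ∈ T' ∧ a ∉ T := by
      intro a ha; have := hA ha; rw [Finset.mem_sdiff] at this; exact this
    have h2 : ∀ a ∈ p.2, a ∈ V ∧ a ∉ T ∧ a ∉ T' := by
      intro a ha; have := hB ha
      rw [Finset.mem_sdiff, Finset.mem_union] at this; tauto
    have hd1 : Disjoint T p.1 := by
      rw [Finset.disjoint_right]; intro a ha; exact (h1 a ha).2
    have hd2 : Disjoint (T ∪ p.1) p.2 := by
      rw [Finset.disjoint_right]; intro a ha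
      rw [Finset.mem_union]
      rintro (h | h)
      · exact (h2 a ha).2.1 h
      · exact (h2 a ha).2.2 (h1 a h).1
    have hcard : (T ∪ p.1 ∪ p.2).card = k := by
      rw [Finset.card_union_of_disjoint hd2, Finset.card_union_of_disjoint hd1, hTc, hAc, hBc]
      omega
    have hKT' : (T ∪ p.1 ∪ p.2) ∩ T' = (T ∩ T') ∪ p.1 := by
      ext a
      simp only [Finset.mem_inter, Finset.mem_union]
      constructor
      · rintro ⟨(h | h) | h, haT'⟩
        · exact Or.inl ⟨h, haT'⟩
        · exact Or.inr h
        · exact absurd haT' (h2 a h).2.2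
      · rintro (⟨h, h'⟩ | h)
        · exact ⟨Or.inl (Or.inl h), h'⟩
        · exact ⟨Or.inl (Or.inr h), (h1 a h).1⟩
    have hdj : Disjoint (T ∩ T') p.1 := by
      rw [Finset.disjoint_right]; intro a ha
      rw [Finset.mem_inter]
      intro h; exact (h1 a ha).2 h.1
    rw [Finset.mem_filter, Finset.mem_powersetCard]
    refine ⟨⟨?_, hcard⟩, ?_, ?_⟩
    · intro a ha
      rw [Finset.mem_union, Finset.mem_union] at ha
      rcases ha with (h | h) | h
      · exact hT h
      · exact hT' (h1 a h).1
      · exact (h2 a h).1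
    · exact (Finset.subset_union_left).trans Finset.subset_union_left
    · rw [hKT', Finset.card_union_of_disjoint hdj, hAc, ← hmdef]
      omega
  · -- left inverse
    intro K hK
    rw [Finset.mem_filter, Finset.mem_powersetCard] at hK
    obtain ⟨⟨hKV, hKc⟩, hTK, hKj⟩ := hK
    ext a
    simp only [Finset.mem_union, Finset.mem_sdiff, Finset.mem_inter]
    have := @hTK a
    tauto
  · -- right inverse
    intro p hp
    rw [Finset.mem_product, Finset.mem_powersetCard, Finset.mem_powersetCard] at hp
    obtain ⟨⟨hA, hAc⟩, hB, hBc⟩ := hp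
    have h1 : ∀ a ∈ p.1, a ∈ T' ∧ a ∉ T := by
      intro a ha; have := hA ha; rw [Finset.mem_sdiff] at this; exact this
    have h2 : ∀ a ∈ p.2, a ∈ V ∧ a ∉ T ∧ a ∉ T' := by
      intro a ha; have := hB ha
      rw [Finset.mem_sdiff, Finset.mem_union] at this; tauto
    have e1 : ((T ∪ p.1 ∪ p.2) ∩ T') \ T = p.1 := by
      ext a
      simp only [Finset.mem_sdiff, Finset.mem_inter, Finset.mem_union]
      constructor
      · rintro ⟨⟨(h | h) | h, haT'⟩, haT⟩
        · exact absurd h haT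
        · exact h
        · exact absurd haT' (h2 a h).2.2
      · intro h
        exact ⟨⟨Or.inl (Or.inr h), (h1 a h).1⟩, (h1 a h).2⟩
    have e2 : (T ∪ p.1 ∪ p.2) \ (T ∪ T') = p.2 := by
      ext a
      simp only [Finset.mem_sdiff, Finset.mem_union]
      constructor
      · rintro ⟨(h | h) | h, hn⟩
        · exact absurd (Or.inl h) hn
        · exact absurd (Or.inr (h1 a h).1) hn
        · exact h
      · intro h
        exact ⟨Or.inr h, by push_neg; exact ⟨(h2 a h).2.1, (h2 a h).2.2⟩⟩
    exact Prod.ext e1 e2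

end Aux

/-- For `t ≤ min (k, v - k)`, the kernel of the transpose of the inclusion matrix
`W_{t,k}` over `ℚ` is trivial: `x · W_{t,k} = 0` implies `x = 0`. -/
theorem inclusion_matrix_vecMul_eq_zero {α : Type*} [DecidableEq α] (V : Finset α)
    (t k : ℕ) (htk : t ≤ k) (htv : t + k ≤ V.card)
    (x : ↥(V.powersetCard t) → ℚ)
    (hx : Matrix.vecMul x (Matrix.of (fun (T : ↥(V.powersetCard t)) (K : ↥(V.powersetCard k)) =>
      if (T : Finset α) ⊆ (K : Finset α) then (1 : ℚ) else 0)) = 0) :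
    x = 0 := by
  have hx' : ∀ K : ↥(V.powersetCard k),
      ∑ T : ↥(V.powersetCard t), x T *
        (if (T : Finset α) ⊆ (K : Finset α) then (1 : ℚ) else 0) = 0 := by
    intro K
    have h := congrFun hx K
    simpa [Matrix.vecMul, dotProduct] using h
  have key : ∀ j, j ≤ t → ∀ T' : ↥(V.powersetCard t),
      ∑ T ∈ Finset.univ.filter
        (fun T : ↥(V.powersetCard t) =>
          ((T : Finset α) ∩ (T' : Finset α)).card = j), x T = 0 := by
    intro j
    induction j using Nat.strong_induction_on with
    | _ j IH =>
    intro hjt T'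
    obtain ⟨hT'V, hT'c⟩ := Finset.mem_powersetCard.1 T'.2
    set N : ℕ → ℚ := fun m => if m ≤ j ∧ t + j ≤ k + m then
        ((t - m).choose (j - m) * (V.card - (2 * t - m)).choose (k + m - (t + j)) : ℚ)
      else 0 with hN
    have h0 : ∑ T : ↥(V.powersetCard t),
        x T * N (((T : Finset α) ∩ (T' : Finset α)).card) = 0 := by
      have hz : ∑ K ∈ Finset.univ.filter (fun K : ↥(V.powersetCard k) =>
          ((K : Finset α) ∩ (T' : Finset α)).card = j),
          ∑ T : ↥(V.powersetCard t), x T *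
            (if (T : Finset α) ⊆ (K : Finset α) then (1 : ℚ) else 0) = 0 :=
        Finset.sum_eq_zero fun K _ => hx' K
      rw [Finset.sum_comm] at hz
      rw [← hz]
      apply Finset.sum_congr rfl
      intro T _
      obtain ⟨hTV, hTc⟩ := Finset.mem_powersetCard.1 T.2
      have hmul : ∑ K ∈ Finset.univ.filter (fun K : ↥(V.powersetCard k) =>
          ((K : Finset α) ∩ (T' : Finset α)).card = j),
          x T * (if (T : Finset α) ⊆ (K : Finset α) then (1 : ℚ) else 0)
          = x T * ((Finset.univ.filter (fun K : ↥(V.powersetCard k) =>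
              ((K : Finset α) ∩ (T' : Finset α)).card = j ∧
              (T : Finset α) ⊆ (K : Finset α))).card : ℚ) := by
        rw [← Finset.mul_sum, Finset.sum_boole, ← Finset.filter_filter]
      rw [hmul]
      congr 1
      rw [aux_card_filter_subtype (V.powersetCard k)
        (fun K => (K ∩ (T' : Finset α)).card = j ∧ (T : Finset α) ⊆ K)]
      have hswap : (V.powersetCard k).filter
          (fun K => (K ∩ (T' : Finset α)).card = j ∧ (T : Finset α) ⊆ K)
          = (V.powersetCard k).filter
          (fun K => (T : Finset α) ⊆ K ∧ (K ∩ (T' : Finset α)).card = j) := by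
        apply Finset.filter_congr
        intro K _
        exact and_comm
      rw [hswap]
      by_cases hc : ((T : Finset α) ∩ (T' : Finset α)).card ≤ j ∧
          t + j ≤ k + ((T : Finset α) ∩ (T' : Finset α)).card
      · rw [aux_count V t k j _ _ hTV hT'V hTc hT'c hc.1 hc.2]
        simp only [hN]
        rw [if_pos hc]
        push_cast
        ring
      · have hempty : (V.powersetCard k).filter
            (fun K => (T : Finset α) ⊆ K ∧ (K ∩ (T' : Finset α)).card = j) = ∅ := by
          rw [Finset.filter_eq_empty_iff]
          intro K hK
          obtain ⟨hKV, hKc⟩ := Finset.mem_powersetCard.1 hK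
          rintro ⟨hTK, hKj⟩
          apply hc
          constructor
          · rw [← hKj]
            exact Finset.card_le_card
              (Finset.inter_subset_inter hTK Finset.Subset.rfl)
          · have h3 : (T : Finset α) ∩ (K ∩ (T' : Finset α))
                = (T : Finset α) ∩ (T' : Finset α) := by
              ext a
              simp only [Finset.mem_inter]
              have := @hTK a
              tauto
            have h4 := Finset.card_union_add_card_inter (T : Finset α)
              (K ∩ (T' : Finset α))
            rw [h3, hTc, hKj] at h4
            have h5 : ((T : Finset α) ∪ (K ∩ (T' : Finset α))).card ≤ k := by
              rw [← hKc]
              exact Finset.card_le_card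
                (Finset.union_subset hTK Finset.inter_subset_left)
            omega
        rw [hempty]
        simp only [hN]
        rw [if_neg hc]
        simp
    -- fiberwise regrouping
    have h1 : ∑ m ∈ Finset.range (t + 1),
        ∑ T ∈ Finset.univ.filter (fun T : ↥(V.powersetCard t) =>
          ((T : Finset α) ∩ (T' : Finset α)).card = m),
          x T * N (((T : Finset α) ∩ (T' : Finset α)).card)
        = ∑ T : ↥(V.powersetCard t),
            x T * N (((T : Finset α) ∩ (T' : Finset α)).card) := by
      apply Finset.sum_fiberwise_of_maps_to
      intro T _
      obtain ⟨hTV, hTc⟩ := Finset.mem_powersetCard.1 T.2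
      rw [Finset.mem_range]
      have : ((T : Finset α) ∩ (T' : Finset α)).card ≤ t := by
        have := Finset.card_le_card (Finset.inter_subset_left :
          ((T : Finset α) ∩ (T' : Finset α)) ⊆ (T : Finset α))
        omega
      omega
    have h2 : ∑ m ∈ Finset.range (t + 1),
        (∑ T ∈ Finset.univ.filter (fun T : ↥(V.powersetCard t) =>
          ((T : Finset α) ∩ (T' : Finset α)).card = m), x T) * N m = 0 := by
      rw [← h0, ← h1]
      apply Finset.sum_congr rfl
      intro m _
      rw [Finset.sum_mul]
      apply Finset.sum_congr rfl
      intro T hT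
      rw [(Finset.mem_filter.1 hT).2]
    rw [Finset.sum_eq_single j] at h2
    · have hNj : N j = ((V.card - (2 * t - j)).choose (k + j - (t + j)) : ℚ) := by
        simp only [hN]
        rw [if_pos ⟨le_rfl, by omega⟩]
        simp
      have hpos : (0 : ℚ) < N j := by
        rw [hNj]
        have : k + j - (t + j) ≤ V.card - (2 * t - j) := by omega
        exact_mod_cast Nat.cast_pos.2 (Nat.choose_pos this)
      rcases mul_eq_zero.1 h2 with h | h
      · exact h
      · exact absurd h (ne_of_gt hpos)
    · intro b hb hbj
      rcases lt_or_gt_of_ne hbj with hlt | hgt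
      · rw [IH b hlt (by omega) T', zero_mul]
      · have : N b = 0 := by
          simp only [hN]
          rw [if_neg (by omega)]
        rw [this, mul_zero]
    · intro hj
      exact absurd (Finset.mem_range.2 (by omega)) hj
  -- conclude
  funext T'
  have hkey := key t le_rfl T'
  obtain ⟨hT'V, hT'c⟩ := Finset.mem_powersetCard.1 T'.2
  have hfilter : Finset.univ.filter (fun T : ↥(V.powersetCard t) =>
      ((T : Finset α) ∩ (T' : Finset α)).card = t) = {T'} := by
    ext T
    obtain ⟨hTV, hTc⟩ := Finset.mem_powersetCard.1 T.2
    simp only [Finset.mem_filter, Finset.mem_univ, true_and, Finset.mem_singleton]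
    constructor
    · intro h
      have hsub : (T : Finset α) ∩ (T' : Finset α) = (T : Finset α) :=
        Finset.eq_of_subset_of_card_le Finset.inter_subset_left (by omega)
      have hTT' : (T : Finset α) ⊆ (T' : Finset α) := by
        rw [← hsub]
        exact Finset.inter_subset_right
      exact Subtype.ext (Finset.eq_of_subset_of_card_le hTT' (by omega))
    · rintro rfl
      rw [Finset.inter_self]
      exact hTc
  rw [hfilter, Finset.sum_singleton] at hkey
  exact hkey
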